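/- Let F be a finite field of order Q, let C be the Reed–Solomon code of length n ≤ Q, dimension k, and rate R = k/n with distinct evaluation points α₁,...,α_n ∈ F. Suppose L is a set of ℓ+1 distinct codewords and z ∈ F^n. Then the total number of agreements Σ_{c ∈ L} |{i : c_i = z_i}| is at most (ℓ+1)n/Q + sqrt((ℓ+1)·n·(Q + (ℓ+1)(k−1))). -/

import Mathlib

open Finset

/-- Evaluation of the polynomial with coefficient vector `c` (degree `< k`) at `x`. -/
def evalc {F : Type*} [CommSemiring F] {k : ℕ} (c : Fin k → F) (x : F) : F :=
  ∑ i : Fin k, c i * x ^ (i : ℕ)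

lemma agree_card_le {F : Type*} [Field F] [DecidableEq F] {k n : ℕ}
    (α : Fin n → F) (hα : Function.Injective α) {f g : Fin k → F} (hfg : f ≠ g) :
    ((Finset.univ.filter (fun i : Fin n => evalc f (α i) = evalc g (α i))).card : ℝ)
      ≤ (k : ℝ) - 1 := by
  obtain ⟨i₀, hi₀⟩ := Function.ne_iff.mp hfg
  set p : Polynomial F := ∑ i : Fin k, Polynomial.C (f i - g i) * Polynomial.X ^ (i : ℕ) with hp
  have hpne : p ≠ 0 := by
    intro h
    apply hi₀
    have := congrArg (fun q => Polynomial.coeff q (i₀ : ℕ)) h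
    simp only [hp, Polynomial.finset_sum_coeff, Polynomial.coeff_C_mul,
      Polynomial.coeff_X_pow, Polynomial.coeff_zero, mul_ite, mul_one, mul_zero] at this
    rw [Finset.sum_eq_single i₀] at this
    · simpa [sub_eq_zero] using this
    · intro b _ hb
      have : (↑i₀ : ℕ) ≠ ↑b := fun h => hb (Fin.val_injective h).symm
      simp [this]
    · simp
  have hdeg : p.natDegree ≤ k - 1 := by
    apply Polynomial.natDegree_sum_le_of_forall_le
    intro i _
    exact le_trans (Polynomial.natDegree_C_mul_X_pow_le _ _) (Nat.le_sub_one_of_lt i.isLt)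
  have hk : 1 ≤ k := i₀.pos
  set s := Finset.univ.filter (fun i : Fin n => evalc f (α i) = evalc g (α i)) with hs
  have heval : ∀ i ∈ s, p.eval (α i) = 0 := by
    intro i hi
    simp only [hs, Finset.mem_filter] at hi
    simp only [hp, Polynomial.eval_finset_sum, Polynomial.eval_mul, Polynomial.eval_C,
      Polynomial.eval_pow, Polynomial.eval_X, sub_mul, Finset.sum_sub_distrib]
    have h2 := hi.2
    simp only [evalc] at h2
    rw [h2, sub_self]
  have hcard : s.card ≤ k - 1 := by
    calc s.card = (s.image α).card := (Finset.card_image_of_injective s hα).symm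
    _ ≤ p.roots.toFinset.card := by
        apply Finset.card_le_card
        intro x hx
        obtain ⟨i, hi, rfl⟩ := Finset.mem_image.mp hx
        simp [Multiset.mem_toFinset, Polynomial.mem_roots, hpne, heval i hi]
    _ ≤ Multiset.card p.roots := p.roots.toFinset_card_le
    _ ≤ p.natDegree := Polynomial.card_roots' p
    _ ≤ k - 1 := hdeg
  calc ((s.card : ℝ)) ≤ ((k - 1 : ℕ) : ℝ) := by exact_mod_cast hcard
  _ = (k:ℝ) - 1 := by rw [Nat.cast_sub hk]; norm_num

lemma dsum {F : Type*} [Fintype F] [DecidableEq F] {Q : ℕ} (hQ : Fintype.card F = Q)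
    (hQpos : 0 < Q) (a b : F) :
    ∑ y : F, (((if a = y then (1:ℝ) else 0) - 1/Q) * ((if b = y then (1:ℝ) else 0) - 1/Q))
      = (if a = b then (1:ℝ) else 0) - 1/Q := by
  have hQ0 : (Q:ℝ) ≠ 0 := Nat.cast_ne_zero.mpr hQpos.ne'
  have h1 : ∑ y : F, (if a = y then (1:ℝ) else 0) = 1 := by simp
  have h2 : ∑ y : F, (if b = y then (1:ℝ) else 0) = 1 := by simp
  have h3 : ∑ y : F, (if a = y then (1:ℝ) else 0) * (if b = y then (1:ℝ) else 0)
      = if a = b then (1:ℝ) else 0 := by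
    simp only [ite_mul, one_mul, zero_mul]
    rw [Finset.sum_ite_eq Finset.univ a (fun y => if b = y then (1:ℝ) else 0)]
    simp [eq_comm]
  have hc : ∑ _y : F, (1/Q : ℝ) * (1/Q) = 1/Q := by
    rw [Finset.sum_const, Finset.card_univ, hQ, nsmul_eq_mul]
    field_simp
  calc ∑ y : F, (((if a = y then (1:ℝ) else 0) - 1/Q) * ((if b = y then (1:ℝ) else 0) - 1/Q))
      = ∑ y : F, ((if a = y then (1:ℝ) else 0) * (if b = y then (1:ℝ) else 0)
          - (1/Q) * (if a = y then (1:ℝ) else 0) - (1/Q) * (if b = y then (1:ℝ) else 0)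
          + (1/Q) * (1/Q)) := by
        apply Finset.sum_congr rfl; intro y _; ring
  _ = (if a = b then (1:ℝ) else 0) - (1/Q) * 1 - (1/Q) * 1 + 1/Q := by
        rw [Finset.sum_add_distrib, Finset.sum_sub_distrib, Finset.sum_sub_distrib,
          ← Finset.mul_sum, ← Finset.mul_sum, h1, h2, h3, hc]
  _ = (if a = b then (1:ℝ) else 0) - 1/Q := by ring

theorem stmt14 {F : Type*} [Field F] [Fintype F] [DecidableEq F] (Q n k ℓ : ℕ)
    (hQ : Fintype.card F = Q) (hkn : k ≤ n) (hnQ : n ≤ Q)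
    (α : Fin n → F) (hα : Function.Injective α)
    -- L is a set of ℓ+1 distinct codewords, identified with their message polynomials
    (L : Finset (Fin k → F)) (hL : L.card = ℓ + 1) (z : Fin n → F) :
    (∑ f ∈ L, ((Finset.univ.filter (fun i : Fin n => evalc f (α i) = z i)).card : ℝ))
      ≤ ((ℓ : ℝ) + 1) * n / Q
        + Real.sqrt (((ℓ : ℝ) + 1) * n * (Q + ((ℓ : ℝ) + 1) * (k - 1))) := by
  have hQpos : 0 < Q := hQ ▸ Fintype.card_pos
  have hQR : (0:ℝ) < Q := Nat.cast_pos.mpr hQpos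
  have hm : ((ℓ:ℝ) + 1) = (L.card : ℝ) := by rw [hL]; push_cast; ring
  rw [hm]
  set m : ℝ := (L.card : ℝ) with hmdef
  have hm0 : 0 ≤ m := Nat.cast_nonneg _
  have hnR : (0:ℝ) ≤ n := Nat.cast_nonneg _
  have hnQR : (n:ℝ) ≤ Q := Nat.cast_le.mpr hnQ
  set Xf : Fin n × F → ℝ :=
    fun p => ∑ f ∈ L, ((if evalc f (α p.1) = p.2 then (1:ℝ) else 0) - 1/Q) with hXf
  set Wf : Fin n × F → ℝ := fun p => ((if z p.1 = p.2 then (1:ℝ) else 0) - 1/Q) with hWf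
  -- inner product = total agreements - m*n/Q
  have hI : ∑ p : Fin n × F, Xf p * Wf p
      = (∑ f ∈ L, ((Finset.univ.filter (fun i : Fin n => evalc f (α i) = z i)).card : ℝ))
        - m * n / Q := by
    rw [Fintype.sum_prod_type]
    have h1 : ∀ i : Fin n, ∑ y : F, Xf (i,y) * Wf (i,y)
        = ∑ f ∈ L, ((if evalc f (α i) = z i then (1:ℝ) else 0) - 1/Q) := by
      intro i
      simp only [hXf, hWf, Finset.sum_mul]
      rw [Finset.sum_comm]
      exact Finset.sum_congr rfl (fun f _ => dsum hQ hQpos _ _)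
    rw [Finset.sum_congr rfl (fun i _ => h1 i), Finset.sum_comm]
    have h2 : ∀ f ∈ L, ∑ i : Fin n, ((if evalc f (α i) = z i then (1:ℝ) else 0) - 1/Q)
        = ((Finset.univ.filter (fun i : Fin n => evalc f (α i) = z i)).card : ℝ) - n / Q := by
      intro f _
      rw [Finset.sum_sub_distrib, Finset.sum_boole, Finset.sum_const, Finset.card_univ,
        Fintype.card_fin, nsmul_eq_mul]
      ring
    rw [Finset.sum_congr rfl h2, Finset.sum_sub_distrib, Finset.sum_const, nsmul_eq_mul]
    ring
  -- norm of W
  have hWsq : ∑ p : Fin n × F, Wf p ^ 2 = n * (1 - 1/Q) := by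
    rw [Fintype.sum_prod_type]
    have h1 : ∀ i : Fin n, ∑ y : F, Wf (i,y) ^ 2 = 1 - 1/Q := by
      intro i
      simp only [hWf, sq]
      rw [dsum hQ hQpos (z i) (z i)]
      simp
    rw [Finset.sum_congr rfl (fun i _ => h1 i), Finset.sum_const, Finset.card_univ,
      Fintype.card_fin, nsmul_eq_mul]
  -- norm of X
  have hXsq : ∑ p : Fin n × F, Xf p ^ 2
      = ∑ f ∈ L, ∑ g ∈ L,
          (((Finset.univ.filter (fun i : Fin n => evalc f (α i) = evalc g (α i))).card : ℝ)
            - n / Q) := by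
    rw [Fintype.sum_prod_type]
    have h1 : ∀ i : Fin n, ∑ y : F, Xf (i,y) ^ 2
        = ∑ f ∈ L, ∑ g ∈ L,
            ((if evalc f (α i) = evalc g (α i) then (1:ℝ) else 0) - 1/Q) := by
      intro i
      simp only [hXf, sq, Finset.sum_mul, Finset.mul_sum]
      rw [Finset.sum_comm]
      refine Finset.sum_congr rfl fun f _ => ?_
      rw [Finset.sum_comm]
      refine Finset.sum_congr rfl fun g _ => ?_
      rw [dsum hQ hQpos]
      simp only [eq_comm]
    rw [Finset.sum_congr rfl (fun i _ => h1 i), Finset.sum_comm]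
    refine Finset.sum_congr rfl fun f _ => ?_
    rw [Finset.sum_comm]
    refine Finset.sum_congr rfl fun g _ => ?_
    rw [Finset.sum_sub_distrib, Finset.sum_boole, Finset.sum_const, Finset.card_univ,
      Fintype.card_fin, nsmul_eq_mul]
    ring
  have hXle : ∑ p : Fin n × F, Xf p ^ 2 ≤ m * ((Q:ℝ) + m * ((k:ℝ) - 1)) := by
    rw [hXsq]
    have hterm : ∀ f ∈ L, ∀ g ∈ L,
        (((Finset.univ.filter (fun i : Fin n => evalc f (α i) = evalc g (α i))).card : ℝ)
          - n / Q) ≤ if f = g then (Q:ℝ) - 1 else (k:ℝ) - 1 := by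
      intro f _ g _
      by_cases h : f = g
      · subst h
        rw [if_pos rfl]
        have : (Finset.univ.filter (fun i : Fin n => evalc f (α i) = evalc f (α i))) =
            Finset.univ := by simp
        rw [this, Finset.card_univ, Fintype.card_fin]
        have hQinv : (0:ℝ) ≤ 1/Q := by positivity
        have hQinv1 : (1:ℝ)/Q ≤ 1 := by
          rw [div_le_one hQR]
          exact_mod_cast hQpos
        have hQid : (Q:ℝ) * (1/Q) = 1 := by field_simp
        calc (n:ℝ) - n/Q = n * (1 - 1/Q) := by ring
        _ ≤ Q * (1 - 1/Q) := mul_le_mul_of_nonneg_right hnQR (sub_nonneg.mpr hQinv1)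
        _ = Q - Q * (1/Q) := by ring
        _ = Q - 1 := by rw [hQid]
      · rw [if_neg h]
        have h1 := agree_card_le α hα h
        have h2 : (0:ℝ) ≤ (n:ℝ)/Q := by positivity
        linarith
    calc ∑ f ∈ L, ∑ g ∈ L, _ ≤ ∑ f ∈ L, ∑ g ∈ L, (if f = g then (Q:ℝ) - 1 else (k:ℝ) - 1) :=
          Finset.sum_le_sum fun f hf => Finset.sum_le_sum fun g hg => hterm f hf g hg
    _ = ∑ f ∈ L, (((Q:ℝ) - (k:ℝ)) + m * ((k:ℝ) - 1)) := by
        refine Finset.sum_congr rfl fun f hf => ?_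
        have hsplit : ∀ g, (if f = g then (Q:ℝ) - 1 else (k:ℝ) - 1)
            = ((k:ℝ) - 1) + (if f = g then (Q:ℝ) - (k:ℝ) else 0) := by
          intro g
          by_cases h : f = g <;> simp [h]
        rw [Finset.sum_congr rfl (fun g _ => hsplit g), Finset.sum_add_distrib,
          Finset.sum_ite_eq L f (fun _ => (Q:ℝ) - (k:ℝ)), if_pos hf,
          Finset.sum_const, nsmul_eq_mul]
        ring
    _ = m * (((Q:ℝ) - (k:ℝ)) + m * ((k:ℝ) - 1)) := by
        rw [Finset.sum_const, nsmul_eq_mul]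
    _ ≤ m * ((Q:ℝ) + m * ((k:ℝ) - 1)) := by
        have hk0 : (0:ℝ) ≤ (k:ℝ) := Nat.cast_nonneg _
        nlinarith
  -- Cauchy-Schwarz
  have hX0 : (0:ℝ) ≤ ∑ p : Fin n × F, Xf p ^ 2 :=
    Finset.sum_nonneg fun p _ => sq_nonneg _
  have hW0 : (0:ℝ) ≤ ∑ p : Fin n × F, Wf p ^ 2 :=
    Finset.sum_nonneg fun p _ => sq_nonneg _
  have hWle : ∑ p : Fin n × F, Wf p ^ 2 ≤ (n:ℝ) := by
    rw [hWsq]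
    have hQinv : (0:ℝ) ≤ 1/Q := by positivity
    nlinarith
  have hCS := Finset.sum_mul_sq_le_sq_mul_sq Finset.univ Xf Wf
  have hB0 : (0:ℝ) ≤ m * ((Q:ℝ) + m * ((k:ℝ) - 1)) := le_trans hX0 hXle
  have hkey : (∑ p : Fin n × F, Xf p * Wf p)
      ≤ Real.sqrt (m * (n:ℝ) * ((Q:ℝ) + m * ((k:ℝ) - 1))) := by
    calc (∑ p : Fin n × F, Xf p * Wf p) ≤ |∑ p : Fin n × F, Xf p * Wf p| := le_abs_self _
    _ = Real.sqrt ((∑ p : Fin n × F, Xf p * Wf p) ^ 2) := (Real.sqrt_sq_eq_abs _).symm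
    _ ≤ Real.sqrt ((∑ p : Fin n × F, Xf p ^ 2) * (∑ p : Fin n × F, Wf p ^ 2)) :=
        Real.sqrt_le_sqrt hCS
    _ ≤ Real.sqrt ((m * ((Q:ℝ) + m * ((k:ℝ) - 1))) * (n:ℝ)) := by
        apply Real.sqrt_le_sqrt
        exact mul_le_mul hXle hWle hW0 hB0
    _ = Real.sqrt (m * (n:ℝ) * ((Q:ℝ) + m * ((k:ℝ) - 1))) := by ring_nf
  rw [hI] at hkey
  linarith
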